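/- Let x : ℕ → ℝ → ℝ be a family of differentiable functions satisfying, for every t ∈ ℝ: x₁ has derivative −x₁(t) + 1 at t, and for every k ≥ 1, x_{k+1} has derivative −x_{k+1}(t) + 2·x_k(t) at t; and x_k(0) = 1 for every k ≥ 1. Then for every k ≥ 2 and every t ≥ 0, the derivative of x_k at t is strictly positive, i.e., −x_k(t) + 2·x_{k−1}(t) > 0. -/

import Mathlib

/-- **The derivatives in the infinite cascade stay strictly positive.**
For the cascade `ẋ₁ = -x₁ + 1`, `ẋ_{k+1} = -x_{k+1} + 2 x_k` with `x_k(0) = 1`,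
for every `k ≥ 2` and every `t ≥ 0` the derivative `-x_k(t) + 2 x_{k-1}(t)` is
strictly positive. -/
theorem cascade_derivative_pos (x : ℕ → ℝ → ℝ)
    (h1 : ∀ t : ℝ, HasDerivAt (x 1) (-(x 1 t) + 1) t)
    (hk : ∀ k : ℕ, 1 ≤ k → ∀ t : ℝ,
      HasDerivAt (x (k + 1)) (-(x (k + 1) t) + 2 * x k t) t)
    (h0 : ∀ k : ℕ, 1 ≤ k → x k 0 = 1) :
    ∀ k : ℕ, 2 ≤ k → ∀ t : ℝ, 0 ≤ t → 0 < -(x k t) + 2 * x (k - 1) t := by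
  -- First: x 1 is identically 1.
  have hx1 : ∀ t : ℝ, x 1 t = 1 := by
    have hg : ∀ t : ℝ, HasDerivAt (fun s => Real.exp s * (x 1 s - 1)) 0 t := by
      intro t
      have := (Real.hasDerivAt_exp t).mul ((h1 t).sub_const 1)
      exact this.congr_deriv (by
      ring)
    have hdiff : Differentiable ℝ (fun s => Real.exp s * (x 1 s - 1)) :=
      fun t => (hg t).differentiableAt
    have hconst : ∀ t : ℝ, Real.exp t * (x 1 t - 1) = Real.exp 0 * (x 1 0 - 1) := by
      intro t
      exact is_const_of_deriv_eq_zero hdiff (fun s => (hg s).deriv) t 0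
    intro t
    have := hconst t
    rw [h0 1 le_rfl] at this
    norm_num at this
    linarith
  -- Main claim, reindexed: for m ≥ 1, the derivative of x (m+1) is positive.
  have main : ∀ m : ℕ, 1 ≤ m → ∀ t : ℝ, 0 ≤ t → 0 < -(x (m + 1) t) + 2 * x m t := by
    intro m hm
    induction m, hm using Nat.le_induction with
    | base =>
      -- k = 2 : exp t * (-(x 2 t) + 2) is constant equal to 1.
      have hg : ∀ t : ℝ, HasDerivAt (fun s => Real.exp s * (-(x 2 s) + 2 * x 1 s)) 0 t := by
        intro t
        have hd : HasDerivAt (fun s => -(x 2 s) + 2 * x 1 s)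
            (-(-(x 2 t) + 2 * x 1 t) + 2 * (-(x 1 t) + 1)) t :=
          ((hk 1 le_rfl t).neg).add ((h1 t).const_mul 2)
        have := (Real.hasDerivAt_exp t).mul hd
        exact this.congr_deriv (by
        rw [hx1 t]
        ring)
      have hdiff : Differentiable ℝ (fun s => Real.exp s * (-(x 2 s) + 2 * x 1 s)) :=
        fun t => (hg t).differentiableAt
      have hconst : ∀ t : ℝ, Real.exp t * (-(x 2 t) + 2 * x 1 t)
          = Real.exp 0 * (-(x 2 0) + 2 * x 1 0) := by
        intro t
        exact is_const_of_deriv_eq_zero hdiff (fun s => (hg s).deriv) t 0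
      intro t ht
      have h := hconst t
      rw [h0 2 (by norm_num), h0 1 le_rfl, Real.exp_zero] at h
      have he := Real.exp_pos t
      nlinarith [h, he]
    | succ m hm ih =>
      -- g t = exp t * (-(x (m+2) t) + 2 * x (m+1) t)
      set g : ℝ → ℝ := fun s => Real.exp s * (-(x (m + 1 + 1) s) + 2 * x (m + 1) s) with hgdef
      have hg : ∀ t : ℝ, HasDerivAt g
          (Real.exp t * (2 * (-(x (m + 1) t) + 2 * x m t))) t := by
        intro t
        have hd : HasDerivAt (fun s => -(x (m + 1 + 1) s) + 2 * x (m + 1) s)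
            (-(-(x (m + 1 + 1) t) + 2 * x (m + 1) t)
              + 2 * (-(x (m + 1) t) + 2 * x m t)) t :=
          ((hk (m + 1) (by omega) t).neg).add ((hk m hm t).const_mul 2)
        have := (Real.hasDerivAt_exp t).mul hd
        exact this.congr_deriv (by
        ring)
      have hdiff : Differentiable ℝ g := fun t => (hg t).differentiableAt
      have hmono : StrictMonoOn g (Set.Ici (0 : ℝ)) := by
        apply strictMonoOn_of_deriv_pos (convex_Ici 0) hdiff.continuous.continuousOn
        intro t ht
        rw [interior_Ici] at ht
        rw [(hg t).deriv]
        have := ih t (le_of_lt ht)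
        nlinarith [Real.exp_pos t]
      have hg0 : g 0 = 1 := by
        simp only [hgdef]
        rw [h0 (m + 1 + 1) (by omega), h0 (m + 1) (by omega), Real.exp_zero]
        ring
      intro t ht
      have hgt : 1 ≤ g t := by
        rcases eq_or_lt_of_le ht with h | h
        · rw [← h, hg0]
        · rw [← hg0]
          exact le_of_lt (hmono Set.self_mem_Ici (le_of_lt h) h)
      have he := Real.exp_pos t
      simp only [hgdef] at hgt
      nlinarith [hgt, he]
  intro k hk2 t ht
  have hk1 : k - 1 + 1 = k := by omega
  have := main (k - 1) (by omega) t ht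
  rwa [hk1] at this
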